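/- Every prime p not dividing 20 that properly divides some value x² + 5y² with gcd(x,y) = 1 satisfies p mod 20 ∈ {1, 3, 7, 9}. -/

import Mathlib

instance fact_prime_five : Fact (Nat.Prime 5) := ⟨by norm_num⟩

/-- Euler: a prime `p ∤ 20` properly dividing some `x² + 5y²` lies in one of the
residue classes `1, 3, 7, 9 mod 20`. -/
theorem divisors_of_x2_plus_5y2 (p : ℕ) (hp : p.Prime) (hp20 : ¬ p ∣ 20)
    (h : ∃ x y : ℤ, Int.gcd x y = 1 ∧ (p : ℤ) ∣ x ^ 2 + 5 * y ^ 2) :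
    p % 20 = 1 ∨ p % 20 = 3 ∨ p % 20 = 7 ∨ p % 20 = 9 := by
  haveI : Fact p.Prime := ⟨hp⟩
  obtain ⟨x, y, hg, hdvd⟩ := h
  have hp2 : p ≠ 2 := fun h2 => hp20 (h2 ▸ by norm_num)
  have hp5 : p ≠ 5 := fun h5 => hp20 (h5 ▸ by norm_num)
  have h5nz : ((-5 : ℤ) : ZMod p) ≠ 0 := by
    rw [Ne, ZMod.intCast_zmod_eq_zero_iff_dvd]
    intro hd
    have hd5 : p ∣ 5 := by
      have := Int.natAbs_dvd_natAbs.mpr hd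
      simpa using this
    exact hp5 ((Nat.prime_dvd_prime_iff_eq hp (by norm_num)).mp hd5)
  have hne : legendreSym p (-5) ≠ -1 := by
    intro hneg
    have hxy : (p : ℤ) ∣ x ^ 2 - (-5) * y ^ 2 := by
      have : x ^ 2 - (-5) * y ^ 2 = x ^ 2 + 5 * y ^ 2 := by ring
      rwa [this]
    obtain ⟨hx, hy⟩ := legendreSym.prime_dvd_of_eq_neg_one hneg hxy
    have hpg : (p : ℤ) ∣ (Int.gcd x y : ℤ) := Int.dvd_coe_gcd hx hy
    rw [hg] at hpg
    have : p ∣ 1 := by exact_mod_cast hpg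
    exact hp.one_lt.ne' (Nat.dvd_one.mp this)
  have hone : legendreSym p (-5) = 1 :=
    (legendreSym.eq_one_or_neg_one p h5nz).resolve_right hne
  have hfac : legendreSym p (-5) = ZMod.χ₄ p * legendreSym p 5 := by
    have h55 : (-5 : ℤ) = -1 * 5 := by norm_num
    rw [h55, legendreSym.mul, legendreSym.at_neg_one hp2]
  have hrec : legendreSym p ((5 : ℕ) : ℤ) = legendreSym 5 ((p : ℕ) : ℤ) :=
    legendreSym.quadratic_reciprocity_one_mod_four (p := 5) (q := p) (by norm_num) hp2
  have hmod5 : legendreSym 5 ((p : ℕ) : ℤ) = legendreSym 5 ((p % 5 : ℕ) : ℤ) := by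
    rw [legendreSym.mod, Int.natCast_mod]
  have key : ZMod.χ₄ p * legendreSym 5 ((p % 5 : ℕ) : ℤ) = 1 := by
    rw [← hmod5, ← hrec]
    push_cast
    rw [← hfac, hone]
  have hp4 : p % 4 = 1 ∨ p % 4 = 3 := by
    have := Nat.odd_iff.mp (hp.odd_of_ne_two hp2); omega
  have hp5m : p % 5 = 1 ∨ p % 5 = 2 ∨ p % 5 = 3 ∨ p % 5 = 4 := by
    have : ¬ (5 ∣ p) := fun hd => hp5 ((Nat.prime_dvd_prime_iff_eq (by norm_num) hp).mp hd).symm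
    omega
  have h20 : p % 20 % 4 = p % 4 := Nat.mod_mod_of_dvd p (by norm_num)
  have h20' : p % 20 % 5 = p % 5 := Nat.mod_mod_of_dvd p (by norm_num)
  have hlt : p % 20 < 20 := Nat.mod_lt p (by norm_num)
  rcases hp4 with h4 | h4 <;>
    [rw [ZMod.χ₄_nat_one_mod_four h4, one_mul] at key;
     rw [ZMod.χ₄_nat_three_mod_four h4, neg_one_mul, neg_eq_iff_eq_neg] at key] <;>
    rcases hp5m with h5 | h5 | h5 | h5 <;> rw [h5] at key <;>
    first
    | (exfalso; revert key; decide)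
    | omega
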